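/- (Correctness of the unrolled folded polynomial.) Let f⁽⁰⁾ = f be a polynomial, and for i = 1,…,m let g_i be any polynomial (in fewer variables), and define f⁽ⁱ⁾ = z⁽ⁱ⁾·g_i + f⁽ⁱ⁻¹⁾(α⁽ⁱ⁾, ·), where α⁽ⁱ⁾ substitutes the first half of the remaining variables. Then f⁽ᵐ⁾(x) = f(α⁽¹⁾,…,α⁽ᵐ⁾, x) + Σ_{j=1}^m z⁽ʲ⁾ · g_j(α⁽ʲ⁺¹⁾,…,α⁽ᵐ⁾, x). (Consistency check formula used by the Fold-DCS verifier.) -/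

import Mathlib

open MvPolynomial in
lemma foldDCS_aux {F : Type*} [CommRing F] {n : ℕ} (α : Fin n → F) (s t : ℕ) (hst : s ≤ t)
    (p : MvPolynomial (Fin n) F) :
    aeval (fun k : Fin n => if (k : ℕ) < t then C (α k) else X k)
      (aeval (fun k : Fin n => if (k : ℕ) < s then C (α k) else X k) p) =
    aeval (fun k : Fin n => if (k : ℕ) < t then C (α k) else X k) p := by
  induction p using MvPolynomial.induction_on with
  | C a => simp
  | add p q hp hq => simp only [map_add, hp, hq]
  | mul_X p v hp =>
    simp only [map_mul, hp, aeval_X]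
    congr 1
    by_cases h : (v : ℕ) < s
    · have h' : (v : ℕ) < t := lt_of_lt_of_le h hst
      simp [h, h', aeval_C]
    · simp [h, aeval_X]

/-- Correctness of the unrolled folded polynomial in Fold-DCS. All polynomials live in
`μ = 2^m` variables; the `i`-th level polynomials only involve the last `2^{m−i}`
variables, and `subst i` substitutes the global random point `α` for all earlier
variables. If `f⁽ⁱ⁾ = z⁽ⁱ⁾·g_i + f⁽ⁱ⁻¹⁾(α⁽ⁱ⁾, ·)`, then
`f⁽ᵐ⁾ = f(α⁽¹⁾,…,α⁽ᵐ⁾, ·) + Σ_{j=1}^m z⁽ʲ⁾·g_j(α⁽ʲ⁺¹⁾,…,α⁽ᵐ⁾, ·)`. -/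
theorem foldDCS_unrolled_fold {F : Type*} [CommRing F] (m μ : ℕ) (hμ : μ = 2 ^ m)
    (f : MvPolynomial (Fin μ) F) (α : Fin μ → F) (z : ℕ → F)
    (g : ℕ → MvPolynomial (Fin μ) F)
    (subst : ℕ → MvPolynomial (Fin μ) F → MvPolynomial (Fin μ) F)
    (hsubst : ∀ i p, subst i p =
      MvPolynomial.aeval (fun k : Fin μ =>
        if (k : ℕ) < μ - 2 ^ (m - i) then MvPolynomial.C (α k) else MvPolynomial.X k) p)
    (hg : ∀ j : ℕ, 1 ≤ j → j ≤ m → subst j (g j) = g j)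
    (fseq : ℕ → MvPolynomial (Fin μ) F) (h0 : fseq 0 = f)
    (hrec : ∀ i : ℕ, 1 ≤ i → i ≤ m → fseq i = z i • g i + subst i (fseq (i - 1))) :
    fseq m = subst m f + ∑ j ∈ Finset.Icc 1 m, z j • subst m (g j) := by
  have hcomp : ∀ (i : ℕ) (p : MvPolynomial (Fin μ) F), subst m (subst i p) = subst m p := by
    intro i p
    rw [hsubst i, hsubst m, hsubst m]
    have h2 : 2 ^ (m - m) ≤ 2 ^ (m - i) := by
      simpa [Nat.sub_self] using Nat.one_le_two_pow
    exact foldDCS_aux α _ _ (Nat.sub_le_sub_left h2 μ) p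
  have key : ∀ i, i ≤ m → subst m (fseq i) =
      subst m f + ∑ j ∈ Finset.Icc 1 i, z j • subst m (g j) := by
    intro i
    induction i with
    | zero => intro _; simp [h0]
    | succ i ih =>
      intro hi
      rw [hrec (i + 1) (by omega) hi]
      simp only [Nat.add_sub_cancel]
      have expand : subst m (z (i + 1) • g (i + 1) + subst (i + 1) (fseq i))
          = z (i + 1) • subst m (g (i + 1)) + subst m (subst (i + 1) (fseq i)) := by
        rw [hsubst m (z (i + 1) • g (i + 1) + subst (i + 1) (fseq i)), map_add, map_smul,
          ← hsubst, ← hsubst]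
      rw [expand, hcomp, ih (by omega), Finset.sum_Icc_succ_top (by omega)]
      abel
  rcases Nat.eq_zero_or_pos m with hm | hm
  · subst hm hμ
    rw [h0, hsubst 0 f]
    simp
  · obtain ⟨n, rfl⟩ : ∃ n, m = n + 1 := ⟨m - 1, by omega⟩
    rw [hrec (n + 1) (by omega) le_rfl]
    simp only [Nat.add_sub_cancel]
    rw [key n (by omega), Finset.sum_Icc_succ_top (by omega),
      hg (n + 1) (by omega) le_rfl]
    abel
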